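/- In any m-dimensional abstract rigidity matroid on K(V), every complete edge set K(U) with U ⊆ V and |U| = m+2 is a circuit. -/

import Mathlib

open Matroid Set

/-- A circuit of a matroid: a minimal dependent set. -/
def Matroid.IsCircuit' {α : Type*} (M : Matroid α) (C : Set α) : Prop :=
  M.Dep C ∧ ∀ D, D ⊂ C → M.Indep D

/-- A cocircuit: a circuit of the dual matroid. -/
def Matroid.IsCocircuit' {α : Type*} (M : Matroid α) (C : Set α) : Prop :=
  M✶.IsCircuit' C

/-- A hyperplane: a maximal subset of the ground set not containing a basis. -/
def Matroid.IsHyperplane {α : Type*} (M : Matroid α) (H : Set α) : Prop :=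
  H ⊆ M.E ∧ (¬ ∃ B ⊆ H, M.IsBase B) ∧
    ∀ H', H ⊂ H' → H' ⊆ M.E → ∃ B ⊆ H', M.IsBase B

/-- The rank of a set: the size of a largest independent subset. -/
noncomputable def Matroid.rk {α : Type*} (M : Matroid α) (X : Set α) : ℕ :=
  sSup {n | ∃ I ⊆ X, M.Indep I ∧ I.ncard = n}

/-- `cK U` is the edge set of the complete graph on the vertex set `U`. -/
def cK {V : Type*} (U : Set V) : Set (Sym2 V) :=
  {e | ¬ e.IsDiag ∧ ∀ v ∈ e, v ∈ U}

/-- The support (set of endpoints) of an edge set. -/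
def supp {V : Type*} (E : Set (Sym2 V)) : Set V := {v | ∃ e ∈ E, v ∈ e}

/-- An edge set is rigid if its closure is the complete graph on its support. -/
def Rigid {V : Type*} (A : Matroid (Sym2 V)) (E : Set (Sym2 V)) : Prop :=
  A.closure E = cK (supp E)

/-- `A` is an `m`-dimensional abstract rigidity matroid on `K(W)`. -/
def IsARMOn {V : Type*} (m : ℕ) (W : Set V) (A : Matroid (Sym2 V)) : Prop :=
  A.E = cK W ∧
  (∀ E F : Set (Sym2 V), E ⊆ cK W → F ⊆ cK W →
    (supp E ∩ supp F).ncard < m →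
    A.closure (E ∪ F) ⊆ cK (supp E) ∪ cK (supp F)) ∧
  (∀ E F : Set (Sym2 V), E ⊆ cK W → F ⊆ cK W →
    Rigid A E → Rigid A F → m ≤ (supp E ∩ supp F).ncard →
    Rigid A (E ∪ F))

/-- The star of a vertex: all edges containing it. -/
def starv {V : Type*} (v : V) : Set (Sym2 V) := {e | ¬ e.IsDiag ∧ v ∈ e}

/-- `C` is a vertex star minus `m-1` edges. -/
def IsStarMinus {V : Type*} (m : ℕ) (C : Set (Sym2 V)) : Prop :=
  ∃ v : V, ∃ D ⊆ starv v, D.ncard = m - 1 ∧ C = starv v \ D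

/-- The valence (degree) of a vertex in an edge set. -/
noncomputable def valence {V : Type*} (C : Set (Sym2 V)) (v : V) : ℕ :=
  {e ∈ C | v ∈ e}.ncard

/-- `bigstar V' = K(V) \ K(V \ V')`. -/
def bigstar {V : Type*} (V' : Set V) : Set (Sym2 V) :=
  cK (univ : Set V) \ cK (V'ᶜ)

/-- The family `H_m(V)` of unions of two complete graphs covering `V` and
meeting in `m-1` vertices. -/
def HmFam (m : ℕ) (V : Type*) : Set (Set (Sym2 V)) :=
  {H | ∃ V₁ V₂ : Set V, V₁ ∪ V₂ = univ ∧ (V₁ ∩ V₂).ncard = m - 1 ∧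
    ¬ V₁ ⊆ V₂ ∧ ¬ V₂ ⊆ V₁ ∧ H = cK V₁ ∪ cK V₂}

/-- The family `H_m^{(1)}(K(X))` of sets `Δ_v^A` relative to a vertex set `X`. -/
def Hm1Fam {V : Type*} (m : ℕ) (X : Set V) : Set (Set (Sym2 V)) :=
  {H | ∃ v ∈ X, ∃ A ⊆ X \ {v}, A.ncard = m - 1 ∧
    H = cK ({v} ∪ A) ∪ cK (X \ {v})}

section aux

variable {V : Type*}

lemma mem_cK {X : Set V} {a b : V} : s(a, b) ∈ cK X ↔ a ≠ b ∧ a ∈ X ∧ b ∈ X := by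
  simp [cK, Sym2.mk_isDiag_iff, Sym2.mem_iff]

lemma cK_mono {X Y : Set V} (h : X ⊆ Y) : cK X ⊆ cK Y :=
  fun e he => ⟨he.1, fun v hv => h (he.2 v hv)⟩

lemma cK_empty : cK (∅ : Set V) = ∅ := by
  ext e
  induction e using Sym2.ind with
  | _ a b => simp [mem_cK]

lemma supp_empty : supp (∅ : Set (Sym2 V)) = ∅ := by simp [supp]

lemma supp_union (E F : Set (Sym2 V)) : supp (E ∪ F) = supp E ∪ supp F := by
  ext v; simp [supp, or_and_right, exists_or]

lemma supp_cK_subset (X : Set V) : supp (cK X) ⊆ X := by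
  rintro v ⟨e, he, hv⟩
  exact he.2 v hv

lemma supp_cK_eq {X : Set V} (hX : X.Finite) (h : 1 < X.ncard) : supp (cK X) = X := by
  refine (supp_cK_subset X).antisymm fun w hw => ?_
  obtain ⟨w', hw', hne⟩ := Set.exists_ne_of_one_lt_ncard h w
  exact ⟨s(w, w'), mem_cK.2 ⟨fun h => hne h.symm, hw, hw'⟩, Sym2.mem_mk_left _ _⟩

variable [Fintype V] [DecidableEq V]

lemma closure_subset_cK_supp {m : ℕ} (hm : 0 < m) {A : Matroid (Sym2 V)}
    (hA : IsARMOn m (univ : Set V) A) {E : Set (Sym2 V)} (hE : E ⊆ cK (univ : Set V)) :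
    A.closure E ⊆ cK (supp E) := by
  have h := hA.2.1 E ∅ hE (empty_subset _) (by simp [supp_empty, hm])
  simpa [supp_empty, cK_empty] using h

lemma rigid_cK {m : ℕ} (hm : 0 < m) {A : Matroid (Sym2 V)}
    (hA : IsARMOn m (univ : Set V) A) {X : Set V} (hX : 1 < X.ncard) :
    Rigid A (cK X) := by
  have hsub : cK X ⊆ cK (univ : Set V) := cK_mono (subset_univ X)
  refine (closure_subset_cK_supp hm hA hsub).antisymm ?_
  rw [supp_cK_eq X.toFinite hX]
  exact A.subset_closure (cK X) (hA.1 ▸ hsub)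

/-- Key lemma: attaching at most `m` edges from a new vertex preserves independence. -/
lemma key {m : ℕ} (hm : 0 < m) {A : Matroid (Sym2 V)}
    (hA : IsARMOn m (univ : Set V) A) {F : Set (Sym2 V)} (hF : A.Indep F)
    {v : V} (hv : v ∉ supp F) {W : Set V} (hvW : v ∉ W) (hW : W.ncard ≤ m) :
    A.Indep (F ∪ (fun w => s(v, w)) '' W) := by
  set D := (fun w => s(v, w)) '' W with hD
  have hDsub : D ⊆ cK (univ : Set V) := by
    rintro e ⟨w, hw, rfl⟩
    exact mem_cK.2 ⟨fun h => hvW (h ▸ hw), trivial, trivial⟩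
  have hFsub : F ⊆ cK (univ : Set V) := hA.1 ▸ hF.subset_ground
  have hFD_E : F ∪ D ⊆ A.E := hA.1 ▸ union_subset hFsub hDsub
  by_contra h
  obtain ⟨I, hI, hFI⟩ := hF.subset_isBasis_of_subset subset_union_left hFD_E
  have hne : I ≠ F ∪ D := fun he => h (he ▸ hI.indep)
  obtain ⟨e, heFD, heI⟩ := Set.exists_of_ssubset (hI.subset.ssubset_of_ne hne)
  have heD : e ∈ D := heFD.resolve_left fun hh => heI (hFI hh)
  obtain ⟨w, hwW, rfl⟩ := heD
  have heF : s(v, w) ∉ F := fun hh => hv ⟨_, hh, Sym2.mem_mk_left _ _⟩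
  -- e is in the closure of the rest
  have hecl : s(v, w) ∈ A.closure (F ∪ (D \ {s(v, w)})) := by
    refine A.closure_subset_closure ?_ (hI.subset_closure heFD)
    intro x hx
    rcases hI.subset hx with hx' | hx'
    · exact Or.inl hx'
    · refine Or.inr ⟨hx', fun hxx => heI ?_⟩
      rw [Set.mem_singleton_iff] at hxx
      rwa [hxx] at hx
  have hsuppD : supp (D \ {s(v, w)}) ⊆ {v} ∪ (W \ {w}) := by
    rintro x ⟨e', ⟨⟨w', hw', rfl⟩, hne'⟩, hxe⟩
    have hww' : w' ≠ w := by
      rintro rfl; exact hne' rfl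
    rcases Sym2.mem_iff.1 hxe with rfl | rfl
    · exact Or.inl rfl
    · exact Or.inr ⟨hw', hww'⟩
  have hcard : (supp F ∩ supp (D \ {s(v, w)})).ncard < m := by
    have hsub : supp F ∩ supp (D \ {s(v, w)}) ⊆ W \ {w} := by
      rintro x ⟨hxF, hxD⟩
      rcases hsuppD hxD with rfl | hx
      · exact absurd hxF hv
      · exact hx
    calc (supp F ∩ supp (D \ {s(v, w)})).ncard
        ≤ (W \ {w}).ncard := Set.ncard_le_ncard hsub (W \ {w}).toFinite
      _ < W.ncard := Set.ncard_diff_singleton_lt_of_mem hwW W.toFinite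
      _ ≤ m := hW
  have hC1 := hA.2.1 F (D \ {s(v, w)}) hFsub (fun x hx => hDsub hx.1) hcard
  rcases hC1 hecl with hc | hc
  · exact hv (hc.2 v (Sym2.mem_mk_left _ _))
  · rcases hsuppD (hc.2 w (Sym2.mem_mk_right v w)) with h | hx
    · exact hvW (Set.mem_singleton_iff.1 h ▸ hwW)
    · exact hx.2 rfl

lemma cK_insert_split {X : Set V} {v : V} (hv : v ∈ X) :
    cK X = cK (X \ {v}) ∪ (fun w => s(v, w)) '' (X \ {v}) := by
  ext e
  induction e using Sym2.ind with
  | _ a b =>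
    simp only [mem_cK, mem_union, mem_image, mem_diff, mem_singleton_iff, Sym2.eq_iff]
    by_cases hva : v = a <;> by_cases hvb : v = b <;> aesop

/-- Complete graphs on at most m+1 vertices are independent. -/
lemma indep_cK_small {m : ℕ} (hm : 0 < m) {A : Matroid (Sym2 V)}
    (hA : IsARMOn m (univ : Set V) A) :
    ∀ n : ℕ, ∀ X : Set V, X.ncard = n → n ≤ m + 1 → A.Indep (cK X) := by
  intro n
  induction n with
  | zero =>
    intro X hX _
    rw [(Set.ncard_eq_zero X.toFinite).1 hX, cK_empty]
    exact A.empty_indep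
  | succ n ih =>
    intro X hX hn
    obtain ⟨v, hv⟩ : X.Nonempty := Set.nonempty_of_ncard_ne_zero (by omega)
    have hX' : (X \ {v}).ncard = n := by
      rw [Set.ncard_diff_singleton_of_mem hv, hX]; omega
    rw [cK_insert_split hv]
    refine key hm hA (ih _ hX' (by omega)) ?_ ?_ (by omega)
    · exact fun h => (supp_cK_subset _ h).2 rfl
    · exact fun h => h.2 rfl

lemma cK_diff_split {U : Set V} {u v : V} (hu : u ∈ U) (hv : v ∈ U) (huv : u ≠ v) :
    cK U \ {s(u, v)} = cK (U \ {v}) ∪ (fun w => s(v, w)) '' (U \ {u, v}) := by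
  ext e
  induction e using Sym2.ind with
  | _ a b =>
    simp only [mem_diff, mem_cK, mem_union, mem_image, mem_singleton_iff, mem_insert_iff,
      Sym2.eq_iff]
    by_cases hva : v = a <;> by_cases hvb : v = b <;> aesop

lemma cK_union_eq {U : Set V} {u v : V} (hu : u ∈ U) (hv : v ∈ U) (huv : u ≠ v) :
    cK (U \ {v}) ∪ cK (U \ {u}) = cK U \ {s(u, v)} := by
  ext e
  induction e using Sym2.ind with
  | _ a b =>
    simp only [mem_union, mem_cK, mem_diff, mem_singleton_iff, Sym2.eq_iff]
    by_cases hva : a = v <;> by_cases hvb : b = v <;> aesop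

end aux

theorem stmt_4 {V : Type*} [Fintype V] [DecidableEq V] (m : ℕ) (hm : 0 < m)
    (A : Matroid (Sym2 V)) (hA : IsARMOn m (univ : Set V) A)
    (hV : m + 1 ≤ Fintype.card V)
    (U : Set V) (hU : U.ncard = m + 2) :
    A.IsCircuit' (cK U) := by
  have hUfin : U.Finite := U.toFinite
  have hUE : cK U ⊆ A.E := hA.1 ▸ cK_mono (subset_univ U)
  -- independence of cK U minus any edge
  have hindep : ∀ u v : V, u ∈ U → v ∈ U → u ≠ v → A.Indep (cK U \ {s(u, v)}) := by
    intro u v hu hv huv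
    rw [cK_diff_split hu hv huv]
    have h1 : (U \ {v}).ncard = m + 1 := by
      rw [Set.ncard_diff_singleton_of_mem hv, hU]; omega
    refine key hm hA (indep_cK_small hm hA (m + 1) _ h1 le_rfl) ?_ ?_ ?_
    · exact fun h => (supp_cK_subset _ h).2 rfl
    · exact fun h => h.2 (Or.inr rfl)
    · have : U \ {u, v} = (U \ {u}) \ {v} := by
        rw [Set.diff_diff]; rfl
      rw [this, Set.ncard_diff_singleton_of_mem (show v ∈ U \ {u} from ⟨hv, fun h => huv h.symm⟩),
        Set.ncard_diff_singleton_of_mem hu, hU]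
      omega
  -- get two distinct vertices
  obtain ⟨u, v, hu, hv, huv⟩ := (Set.one_lt_ncard_iff hUfin).1 (by omega : 1 < U.ncard)
  -- dependence
  have hdep : A.Dep (cK U) := by
    have h1 : (U \ {v}).ncard = m + 1 := by
      rw [Set.ncard_diff_singleton_of_mem hv, hU]; omega
    have h2 : (U \ {u}).ncard = m + 1 := by
      rw [Set.ncard_diff_singleton_of_mem hu, hU]; omega
    have hr1 : Rigid A (cK (U \ {v})) := rigid_cK hm hA (by omega)
    have hr2 : Rigid A (cK (U \ {u})) := rigid_cK hm hA (by omega)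
    have hs1 : supp (cK (U \ {v})) = U \ {v} := supp_cK_eq (Set.toFinite _) (by omega)
    have hs2 : supp (cK (U \ {u})) = U \ {u} := supp_cK_eq (Set.toFinite _) (by omega)
    have hcard : m ≤ (supp (cK (U \ {v})) ∩ supp (cK (U \ {u}))).ncard := by
      rw [hs1, hs2]
      have heq : (U \ {v}) ∩ (U \ {u}) = (U \ {u}) \ {v} := by
        ext x; simp only [mem_inter_iff, mem_diff, mem_singleton_iff]; tauto
      rw [heq, Set.ncard_diff_singleton_of_mem (show v ∈ U \ {u} from ⟨hv, fun h => huv h.symm⟩), h2]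
      omega
    have hrig := hA.2.2 _ _ (cK_mono (subset_univ _)) (cK_mono (subset_univ _)) hr1 hr2 hcard
    rw [Rigid, supp_union, hs1, hs2] at hrig
    have hUu : (U \ {v}) ∪ (U \ {u}) = U := by
      ext x; simp only [mem_union, mem_diff, mem_singleton_iff]
      constructor
      · rintro (⟨h, _⟩ | ⟨h, _⟩) <;> exact h
      · intro hx
        by_cases hxv : x = v
        · exact Or.inr ⟨hx, fun h => huv ((h ▸ hxv) ▸ rfl)⟩
        · exact Or.inl ⟨hx, hxv⟩
    rw [cK_union_eq hu hv huv, hUu] at hrig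
    have hmem : s(u, v) ∈ A.closure (cK U \ {s(u, v)}) := by
      rw [hrig]; exact mem_cK.2 ⟨huv, hu, hv⟩
    exact ⟨fun hind => hind.notMem_closure_diff_of_mem (mem_cK.2 ⟨huv, hu, hv⟩) hmem, hUE⟩
  refine ⟨hdep, fun D hD => ?_⟩
  obtain ⟨e, heU, heD⟩ := Set.exists_of_ssubset hD
  have hDe : D ⊆ cK U \ {e} := fun x hx => ⟨hD.subset hx, fun h => heD (h ▸ hx)⟩
  revert heU heD hDe
  induction e using Sym2.ind with
  | _ a b =>
    intro heU heD hDe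
    obtain ⟨hab, haU, hbU⟩ := mem_cK.1 heU
    exact (hindep a b haU hbU hab).subset hDe
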